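/- Let B = Z^d with d ≥ 1. The element d - Z₁ - Z₂ - ⋯ - Z_d of the Laurent polynomial ring Z[Z₁^{±1}, …, Z_d^{±1}] does not belong to any ideal generated by fewer than d elements of the form 1 - Z^t with t ∈ Z^d. -/

import Mathlib

open MonoidAlgebra

/-- The monomial `Z^t` in the group ring `ℤ[ℤ^d]`, identified with the Laurent
polynomial ring in `d` variables. -/
noncomputable abbrev ZMon (d : ℕ) (t : Fin d → ℤ) :
    MonoidAlgebra ℤ (Multiplicative (Fin d → ℤ)) :=
  MonoidAlgebra.of ℤ (Multiplicative (Fin d → ℤ)) (Multiplicative.ofAdd t)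

/-- There is a nonzero rational linear functional vanishing on fewer than `d`
given vectors of `ℤ^d`. -/
lemma exists_ann_aux (d k : ℕ) (hk : k < d) (t : Fin k → (Fin d → ℤ)) :
    ∃ x : Fin d → ℚ, x ≠ 0 ∧ ∀ j, ∑ i, x i * (t j i : ℚ) = 0 := by
  by_contra h
  push_neg at h
  let L : (Fin d → ℚ) →ₗ[ℚ] (Fin k → ℚ) :=
    (Matrix.of fun j i => (t j i : ℚ)).mulVecLin
  have hinj : Function.Injective L := by
    rw [← LinearMap.ker_eq_bot, Submodule.eq_bot_iff]
    intro x hx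
    by_contra hx0
    obtain ⟨j, hj⟩ := h x hx0
    apply hj
    have := congrFun hx j
    simpa [L, Matrix.mulVec, dotProduct, mul_comm] using this
  have := LinearMap.finrank_le_finrank_of_injective hinj
  simp [Module.finrank_pi] at this
  omega

/-- The element `d - Z₁ - ⋯ - Z_d` of `ℤ[Z₁^{±1},…,Z_d^{±1}]` does not belong to any
ideal generated by fewer than `d` elements of the form `1 - Z^t`. -/
theorem d_sub_sum_not_mem_span (d : ℕ) (hd : 1 ≤ d) (k : ℕ) (hk : k < d)
    (t : Fin k → (Fin d → ℤ)) :
    ((d : MonoidAlgebra ℤ (Multiplicative (Fin d → ℤ))) -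
        ∑ i : Fin d, ZMon d (Pi.single i 1)) ∉
      Ideal.span (Set.range fun j => 1 - ZMon d (t j)) := by
  obtain ⟨x, hx, hxt⟩ := exists_ann_aux d k hk t
  intro hmem
  let φ : (Fin d → ℤ) →+ ℚ :=
    { toFun := fun v => ∑ i, x i * (v i : ℚ)
      map_zero' := by simp
      map_add' := by intro a b; simp [mul_add, Finset.sum_add_distrib] }
  let g : Multiplicative (Fin d → ℤ) →* Multiplicative ℚ := AddMonoidHom.toMultiplicative φ
  let F := MonoidAlgebra.mapDomainRingHom (M := Multiplicative (Fin d → ℤ)) ℤ g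
  have hgen : ∀ j, F (1 - MonoidAlgebra.of ℤ _ (Multiplicative.ofAdd (t j))) = 0 := by
    intro j
    have hgj : g (Multiplicative.ofAdd (t j)) = 1 := by
      simp only [g, AddMonoidHom.toMultiplicative_apply_apply, φ, AddMonoidHom.coe_mk,
        ZeroHom.coe_mk, toAdd_ofAdd, hxt j, ofAdd_zero]
    simp only [F, MonoidAlgebra.mapDomainRingHom_apply, MonoidAlgebra.of_apply,
      MonoidAlgebra.one_def, map_sub]
    show MonoidAlgebra.mapDomain ⇑g (single 1 1) -
      MonoidAlgebra.mapDomain ⇑g (single (Multiplicative.ofAdd (t j)) 1) = 0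
    rw [MonoidAlgebra.mapDomain_single, MonoidAlgebra.mapDomain_single, hgj, map_one, sub_self]
  -- the span is contained in the kernel of F
  have hker : Ideal.span (Set.range fun j => 1 - ZMon d (t j)) ≤ RingHom.ker F := by
    rw [Ideal.span_le]
    rintro _ ⟨j, rfl⟩
    exact hgen j
  have hF0 : F ((d : MonoidAlgebra ℤ (Multiplicative (Fin d → ℤ))) -
      ∑ i : Fin d, ZMon d (Pi.single i 1)) = 0 := hker hmem
  -- compute F of the element
  have hFsingle : ∀ i : Fin d, F (ZMon d (Pi.single i 1)) =
      MonoidAlgebra.single (Multiplicative.ofAdd (x i)) (1 : ℤ) := by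
    intro i
    have hgi : g (Multiplicative.ofAdd (Pi.single i 1 : Fin d → ℤ)) =
        Multiplicative.ofAdd (x i) := by
      simp only [g, AddMonoidHom.toMultiplicative_apply_apply, φ, AddMonoidHom.coe_mk,
        ZeroHom.coe_mk, toAdd_ofAdd]
      congr 1
      simp [Pi.single_apply]
    show MonoidAlgebra.mapDomain ⇑g (single (Multiplicative.ofAdd (Pi.single i 1 : Fin d → ℤ)) 1) = _
    rw [MonoidAlgebra.mapDomain_single, hgi]
  rw [map_sub, map_natCast, map_sum] at hF0
  simp only [hFsingle] at hF0
  -- evaluate the coefficient at the identity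
  have hF0' : (Finsupp.single 1 (d : ℤ) -
      ∑ i : Fin d, Finsupp.single (Multiplicative.ofAdd (x i)) (1 : ℤ) :
      Multiplicative ℚ →₀ ℤ) = (0 : Multiplicative ℚ →₀ ℤ) := by
    simpa only [MonoidAlgebra.coeff_sub, MonoidAlgebra.coeff_sum, MonoidAlgebra.coeff_natCast,
      MonoidAlgebra.coeff_single, MonoidAlgebra.coeff_zero] using congrArg MonoidAlgebra.coeff hF0
  have hcoef := Finsupp.ext_iff.mp hF0' (1 : Multiplicative ℚ)
  rw [Finsupp.sub_apply, Finsupp.finset_sum_apply, Finsupp.zero_apply] at hcoef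
  simp only [Finsupp.single_apply] at hcoef
  simp only [if_true] at hcoef
  -- the sum of indicators is at most d, with strict inequality since x ≠ 0
  have hi0 : ∃ i0, x i0 ≠ 0 := by
    by_contra hc
    push_neg at hc
    exact hx (funext hc)
  obtain ⟨i0, hi0⟩ := hi0
  have hsum : ∑ i : Fin d, (if Multiplicative.ofAdd (x i) = 1 then (1 : ℤ) else 0) < d := by
    calc ∑ i : Fin d, (if Multiplicative.ofAdd (x i) = 1 then (1 : ℤ) else 0)
        < ∑ i : Fin d, 1 := by
          apply Finset.sum_lt_sum
          · intro i _; split <;> simp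
          · refine ⟨i0, Finset.mem_univ _, ?_⟩
            rw [if_neg]
            · norm_num
            · intro hcon
              exact hi0 (by simpa using hcon)
      _ = d := by simp
  omega
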